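/- Let N be a nonempty nested set of C_m and suppose the rotation subgroup H = (D_m)_N ∩ ⟨σ_1⟩ of its stabilizer has order d. Then H acts freely on the elements of N (every H-orbit on N has cardinality exactly d); in particular d divides |N|, and N decomposes into d pairwise disjoint subsets N_1, …, N_d of equal cardinality |N|/d with σ_{m/d}^{i−1}·N_1 = N_i for i = 1, …, d. -/

import Mathlib

open Pointwise

def cycleGraph (m : ℕ) : SimpleGraph (ZMod m) where
  Adj i j := i ≠ j ∧ (j = i + 1 ∨ i = j + 1)
  symm := ⟨fun i j (h : i ≠ j ∧ (j = i + 1 ∨ i = j + 1)) => ⟨h.1.symm, h.2.symm⟩⟩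
  loopless := ⟨fun i h => h.1 rfl⟩

def IsConnSubset (m : ℕ) (I : Set (ZMod m)) : Prop :=
  ((cycleGraph m).induce I).Connected

def IsNested (m : ℕ) (N : Set (Set (ZMod m))) : Prop :=
  N.Finite ∧
  (∀ I ∈ N, I.Nonempty ∧ I ≠ Set.univ ∧ IsConnSubset m I) ∧
  (∀ I ∈ N, ∀ J ∈ N, I ⊆ J ∨ J ⊆ I ∨ I ∩ J = ∅) ∧
  (∀ S : Finset (Set (ZMod m)), ↑S ⊆ N → 2 ≤ S.card →
    ((S : Set (Set (ZMod m))).Pairwise fun I J => I ∩ J = ∅) →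
    ¬ IsConnSubset m (⋃ I ∈ S, I))

def rot (m : ℕ) : Equiv.Perm (ZMod m) := Equiv.addRight 1

def cycRefl (m : ℕ) : Equiv.Perm (ZMod m) := Equiv.neg (ZMod m)

def dihedral (m : ℕ) : Subgroup (Equiv.Perm (ZMod m)) :=
  Subgroup.closure {rot m, cycRefl m}

def IsReflection (m : ℕ) (φ : Equiv.Perm (ZMod m)) : Prop :=
  φ ∈ dihedral m ∧ φ ∉ Subgroup.zpowers (rot m)

def nestedStab (m : ℕ) (N : Set (Set (ZMod m))) : Subgroup (Equiv.Perm (ZMod m)) :=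
  dihedral m ⊓ MulAction.stabilizer (Equiv.Perm (ZMod m)) N

def rotStab (m : ℕ) (N : Set (Set (ZMod m))) : Subgroup (Equiv.Perm (ZMod m)) :=
  Subgroup.zpowers (rot m) ⊓ nestedStab m N

noncomputable def alphaNum (m d k : ℕ) : ℕ :=
  {N : Set (Set (ZMod m)) | IsNested m N ∧ N.ncard = k ∧
    Nat.card (rotStab m N) = d ∧ ¬ ∃ φ ∈ nestedStab m N, IsReflection m φ}.ncard

noncomputable def betaNum (m d k : ℕ) : ℕ :=
  {N : Set (Set (ZMod m)) | IsNested m N ∧ N.ncard = k ∧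
    Nat.card (rotStab m N) = d ∧ ∃ φ ∈ nestedStab m N, IsReflection m φ}.ncard

noncomputable def gammaNum (m d k : ℕ) : ℕ := alphaNum m d k + betaNum m d k

section AuxFree

lemma rot_pow_apply (m n : ℕ) : ∀ x : ZMod m, ((rot m) ^ n) x = x + (n : ZMod m) := by
  induction n with
  | zero => intro x; simp
  | succ k ih =>
    intro x
    rw [pow_succ, Equiv.Perm.mul_apply, ih]
    show ((rot m) x) + (k : ZMod m) = x + ((k+1 : ℕ) : ZMod m)
    simp only [rot, Equiv.coe_addRight]
    push_cast
    ring

lemma rot_zpow_apply (m : ℕ) (n : ℤ) (x : ZMod m) : ((rot m) ^ n) x = x + (n : ZMod m) := by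
  obtain ⟨k, rfl | rfl⟩ := Int.eq_nat_or_neg n
  · rw [zpow_natCast, rot_pow_apply]; push_cast; ring
  · rw [zpow_neg, zpow_natCast]
    have h := rot_pow_apply m k (((rot m ^ k)⁻¹) x)
    rw [show (rot m ^ k) ((rot m ^ k)⁻¹ x) = x from (rot m ^ k).apply_symm_apply x] at h
    have h2 : ((rot m ^ k)⁻¹) x = x - (k : ZMod m) := by
      rw [eq_sub_iff_add_eq, ← h]
    rw [h2]; push_cast; ring

lemma rot_pow_eq_one {m : ℕ} {k : ℕ} : (rot m) ^ k = 1 ↔ (k : ZMod m) = 0 := by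
  constructor
  · intro h
    have := congrArg (fun ψ : Equiv.Perm (ZMod m) => ψ 0) h
    simpa [rot_pow_apply] using this
  · intro h
    ext y
    rw [rot_pow_apply, h, add_zero]
    rfl

lemma orderOf_rot {m : ℕ} [NeZero m] : orderOf (rot m) = m := by
  have h1 : (rot m) ^ m = 1 := rot_pow_eq_one.mpr (ZMod.natCast_self m)
  have h2 : orderOf (rot m) ∣ m := orderOf_dvd_of_pow_eq_one h1
  have h3 : m ∣ orderOf (rot m) := by
    have h4 := pow_orderOf_eq_one (rot m)
    exact (ZMod.natCast_eq_zero_iff _ _).mp (rot_pow_eq_one.mp h4)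
  exact Nat.dvd_antisymm h2 h3

lemma val_step {m : ℕ} (hm : 2 ≤ m) {I : Set (ZMod m)} {x : ZMod m} (hx : x ∉ I)
    {u v : ZMod m} (hu : u ∈ I) (hv : v ∈ I) (h : v = u + 1) :
    (v - x).val = (u - x).val + 1 := by
  haveI : NeZero m := ⟨by omega⟩
  have hvx : v - x ≠ 0 := sub_ne_zero.mpr (by rintro rfl; exact hx hv)
  have h2 : v - x = (u - x) + 1 := by rw [h]; ring
  have hval1 : (1 : ZMod m).val = 1 := by
    rw [ZMod.val_one_eq_one_mod]; exact Nat.mod_eq_of_lt (by omega)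
  have hlt : (u - x).val < m := ZMod.val_lt _
  rcases Nat.lt_or_ge ((u - x).val + 1) m with hc | hc
  · rw [h2, ZMod.val_add, hval1, Nat.mod_eq_of_lt hc]
  · exfalso
    have hm2 : (u - x).val + 1 = m := by omega
    have : (v - x).val = 0 := by
      rw [h2, ZMod.val_add, hval1, hm2, Nat.mod_self]
    exact hvx ((ZMod.val_eq_zero _).mp this)

lemma walk_ivt {m : ℕ} (hm : 2 ≤ m) {I : Set (ZMod m)} {x : ZMod m} (hx : x ∉ I)
    {u v : ↥I} (p : ((cycleGraph m).induce I).Walk u v) :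
    ∀ n : ℕ, min ((u.1 - x).val) ((v.1 - x).val) ≤ n →
      n ≤ max ((u.1 - x).val) ((v.1 - x).val) → ∃ z ∈ I, (z - x).val = n := by
  induction p with
  | nil =>
    intro n h1 h2
    rename_i w
    exact ⟨w.1, w.2, by omega⟩
  | @cons a b c h q ih =>
    intro n h1 h2
    have hadj : (a : ZMod m) ≠ (b : ZMod m) ∧ ((b : ZMod m) = a + 1 ∨ (a : ZMod m) = b + 1) := SimpleGraph.induce_adj.mp h
    have hstep : ((b : ZMod m) - x).val = ((a : ZMod m) - x).val + 1 ∨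
        ((a : ZMod m) - x).val = ((b : ZMod m) - x).val + 1 := by
      rcases hadj.2 with h' | h'
      · exact Or.inl (val_step hm hx a.2 b.2 h')
      · exact Or.inr (val_step hm hx b.2 a.2 h')
    by_cases hcase : min ((b.1 - x).val) ((c.1 - x).val) ≤ n ∧
        n ≤ max ((b.1 - x).val) ((c.1 - x).val)
    · exact ih n hcase.1 hcase.2
    · refine ⟨a.1, a.2, ?_⟩
      omega

lemma exists_arc {m : ℕ} (hm : 2 ≤ m) {I : Set (ZMod m)} (hne : I.Nonempty)
    (hproper : I ≠ Set.univ) (hconn : IsConnSubset m I) :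
    ∃ (a : ZMod m) (l : ℕ), 0 < l ∧ l < m ∧ I = {y | ∃ t : ℕ, t < l ∧ y = a + (t : ZMod m)} := by
  haveI : NeZero m := ⟨by omega⟩
  obtain ⟨x, hx⟩ := (Set.ne_univ_iff_exists_notMem I).mp hproper
  set f : ZMod m → ℕ := fun y => (y - x).val with hf
  have hfinj : ∀ y z : ZMod m, f y = f z → y = z := by
    intro y z h
    have := ZMod.val_injective m h
    have h2 : y - x = z - x := this
    linear_combination h2
  set S : Set ℕ := f '' I with hS
  have hSne : S.Nonempty := hne.image f
  have hSbdd : BddAbove S := ⟨m, by rintro _ ⟨y, _, rfl⟩; exact le_of_lt (ZMod.val_lt _)⟩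
  set n₀ := sInf S with hn₀
  set n₁ := sSup S with hn₁
  obtain ⟨u₀, hu₀, hu₀f⟩ := Nat.sInf_mem hSne
  obtain ⟨u₁, hu₁, hu₁f⟩ := Nat.sSup_mem hSne hSbdd
  rw [← hn₀] at hu₀f
  rw [← hn₁] at hu₁f
  have hlb : ∀ z ∈ I, n₀ ≤ f z := fun z hz => Nat.sInf_le ⟨z, hz, rfl⟩
  have hub : ∀ z ∈ I, f z ≤ n₁ := fun z hz => le_csSup hSbdd ⟨z, hz, rfl⟩
  have hn₀pos : 1 ≤ n₀ := by
    rw [← hu₀f]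
    show 1 ≤ (u₀ - x).val
    have : u₀ - x ≠ 0 := sub_ne_zero.mpr (by rintro rfl; exact hx hu₀)
    have := (ZMod.val_eq_zero (u₀ - x)).not.mpr this
    omega
  have hn₁lt : n₁ < m := by rw [← hu₁f]; exact ZMod.val_lt _
  have h01 : n₀ ≤ n₁ := hn₀ ▸ hu₁f ▸ hlb u₁ hu₁
  have hIVT : ∀ n : ℕ, n₀ ≤ n → n ≤ n₁ → ∃ z ∈ I, f z = n := by
    intro n hn1 hn2
    obtain ⟨p⟩ := hconn.preconnected ⟨u₀, hu₀⟩ ⟨u₁, hu₁⟩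
    have h' := walk_ivt hm hx p n
    have e0 : (((⟨u₀, hu₀⟩ : ↥I) : ZMod m) - x).val = n₀ := hu₀f
    have e1 : (((⟨u₁, hu₁⟩ : ↥I) : ZMod m) - x).val = n₁ := hu₁f
    rw [e0, e1] at h'
    exact h' (by omega) (by omega)
  refine ⟨x + (n₀ : ZMod m), n₁ + 1 - n₀, by omega, by omega, ?_⟩
  ext y
  constructor
  · intro hy
    refine ⟨f y - n₀, by have := hub y hy; omega, ?_⟩
    have h1 : ((f y : ℕ) : ZMod m) = y - x := ZMod.natCast_rightInverse (y - x)
    have h2 : (n₀ : ℕ) + (f y - n₀) = f y := by have := hlb y hy; omega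
    have : x + (n₀ : ZMod m) + ((f y - n₀ : ℕ) : ZMod m) = x + ((n₀ + (f y - n₀) : ℕ) : ZMod m) := by
      push_cast; ring
    rw [this, h2, h1]; ring
  · rintro ⟨t, ht, rfl⟩
    obtain ⟨z, hz, hzf⟩ := hIVT (n₀ + t) (by omega) (by omega)
    have hfy : f (x + (n₀ : ZMod m) + (t : ZMod m)) = n₀ + t := by
      show (x + (n₀ : ZMod m) + (t : ZMod m) - x).val = n₀ + t
      have : x + (n₀ : ZMod m) + (t : ZMod m) - x = ((n₀ + t : ℕ) : ZMod m) := by push_cast; ring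
      rw [this, ZMod.val_cast_of_lt (by omega)]
    have := hfinj _ _ (hfy.trans hzf.symm)
    rwa [this]

lemma rotStab_free {m : ℕ} (hm : 2 ≤ m) {N : Set (Set (ZMod m))} (hN : IsNested m N)
    {φ : Equiv.Perm (ZMod m)} (hφ : φ ∈ rotStab m N) {I : Set (ZMod m)} (hI : I ∈ N)
    (hfix : φ • I = I) : φ = 1 := by
  haveI : NeZero m := ⟨by omega⟩
  have hφ' : φ ∈ Subgroup.zpowers (rot m) ⊓ nestedStab m N := hφ
  obtain ⟨k, hk⟩ := Subgroup.mem_zpowers_iff.mp (Subgroup.mem_inf.mp hφ').1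
  set c : ZMod m := (k : ZMod m) with hc
  have hap : ∀ y : ZMod m, φ y = y + c := by
    intro y; rw [← hk, rot_zpow_apply]
  obtain ⟨hIne, hIproper, hIconn⟩ := hN.2.1 I hI
  obtain ⟨a, l, hl0, hlm, hIeq⟩ := exists_arc hm hIne hIproper hIconn
  have haI : a ∈ I := by rw [hIeq]; exact ⟨0, hl0, by simp⟩
  have hkey : ∀ b ∈ I, b - 1 ∉ I → b = a := by
    intro b hb hb1
    rw [hIeq] at hb
    obtain ⟨t, ht, rfl⟩ := hb
    rcases Nat.eq_zero_or_pos t with rfl | htpos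
    · simp
    · exfalso
      apply hb1
      rw [hIeq]
      refine ⟨t - 1, by omega, ?_⟩
      have : ((t - 1 : ℕ) : ZMod m) = (t : ZMod m) - 1 := by
        rw [Nat.cast_sub htpos, Nat.cast_one]
      rw [this]; ring
  have ha1 : a - 1 ∉ I := by
    rw [hIeq]
    rintro ⟨t, ht, hat⟩
    have h1 : (t : ZMod m) = ((m - 1 : ℕ) : ZMod m) := by
      have : (t : ZMod m) = -1 := by linear_combination -hat
      rw [this, Nat.cast_sub (by omega), ZMod.natCast_self]; ring
    have h2 := congrArg ZMod.val h1
    rw [ZMod.val_cast_of_lt (show t < m by omega), ZMod.val_cast_of_lt (show m - 1 < m by omega)] at h2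
    omega
  have hφaI : φ a ∈ I := by
    have h1 : φ • a ∈ φ • I := Set.smul_mem_smul_set haI
    rw [hfix] at h1
    exact h1
  have hφa1 : φ a - 1 ∉ I := by
    intro hmem
    have h1 : φ a - 1 ∈ φ • I := hfix.symm ▸ hmem
    obtain ⟨b, hb, hb2⟩ := h1
    have hb3 : φ b = φ a - 1 := hb2
    rw [hap b, hap a] at hb3
    have : b = a - 1 := by linear_combination hb3
    rw [this] at hb
    exact ha1 hb
  have hfa : φ a = a := hkey _ hφaI hφa1
  have hc0 : c = 0 := by
    have := hap a
    rw [hfa] at this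
    linear_combination -this
  ext y
  rw [hap y, hc0, add_zero]
  rfl

end AuxFree

lemma rotStab_gen {m d : ℕ} [NeZero m] {N : Set (Set (ZMod m))}
    (hd : Nat.card (rotStab m N) = d) :
    (rot m) ^ (m / d) ∈ rotStab m N ∧ orderOf ((rot m) ^ (m / d)) = d ∧ d ∣ m ∧ 0 < d ∧
      ∀ φ ∈ rotStab m N, ∃ i : ℤ, φ = ((rot m) ^ (m / d)) ^ i := by
  have hm0 : 0 < m := Nat.pos_of_ne_zero (NeZero.ne m)
  set H := rotStab m N with hH
  let L : AddSubgroup ℤ :=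
    { carrier := {k : ℤ | (rot m) ^ k ∈ H}
      zero_mem' := by simp only [Set.mem_setOf_eq, zpow_zero]; exact one_mem H
      add_mem' := by
        intro k k' hk hk'
        simp only [Set.mem_setOf_eq, zpow_add] at *
        exact mul_mem hk hk'
      neg_mem' := by
        intro k hk
        simp only [Set.mem_setOf_eq, zpow_neg] at *
        exact inv_mem hk }
  have hmL : (m : ℤ) ∈ L := by
    show (rot m) ^ ((m : ℕ) : ℤ) ∈ H
    rw [zpow_natCast, rot_pow_eq_one.mpr (ZMod.natCast_self m)]
    exact one_mem H
  obtain ⟨g, hg⟩ := Int.subgroup_cyclic L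
  have hgdvd : ∀ k : ℤ, k ∈ L ↔ g ∣ k := by
    intro k
    rw [hg, AddSubgroup.mem_closure_singleton]
    constructor
    · rintro ⟨n, rfl⟩; exact ⟨n, by rw [smul_eq_mul, mul_comm]⟩
    · rintro ⟨n, rfl⟩; exact ⟨n, by rw [smul_eq_mul, mul_comm]⟩
  have hg0 : g ≠ 0 := by
    intro h
    have := (hgdvd m).mp hmL
    rw [h] at this
    have := zero_dvd_iff.mp this
    omega
  set g' : ℕ := g.natAbs with hg'
  have hg'0 : 0 < g' := Int.natAbs_pos.mpr hg0
  have hg'dvd : ∀ k : ℤ, k ∈ L ↔ (g' : ℤ) ∣ k := by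
    intro k; rw [hgdvd]; rw [hg']; exact (Int.natAbs_dvd).symm
  have hg'm : g' ∣ m := by
    have := (hg'dvd m).mp hmL
    exact_mod_cast Int.ofNat_dvd.mp this
  have hρH : (rot m) ^ g' ∈ H := by
    have : ((g' : ℕ) : ℤ) ∈ L := (hg'dvd _).mpr dvd_rfl
    have h2 : (rot m) ^ ((g' : ℕ) : ℤ) ∈ H := this
    rwa [zpow_natCast] at h2
  have hHeq : H = Subgroup.zpowers ((rot m) ^ g') := by
    apply le_antisymm
    · intro φ hφ
      have hφ' : φ ∈ Subgroup.zpowers (rot m) ⊓ nestedStab m N := hφ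
      obtain ⟨k, hk⟩ := Subgroup.mem_zpowers_iff.mp (Subgroup.mem_inf.mp hφ').1
      have hkL : k ∈ L := by show (rot m) ^ k ∈ H; rw [hk]; exact hφ
      obtain ⟨n, rfl⟩ := (hg'dvd k).mp hkL
      rw [Subgroup.mem_zpowers_iff]
      refine ⟨n, ?_⟩
      rw [← hk, zpow_mul, zpow_natCast]
    · exact Subgroup.zpowers_le.mpr hρH
  have hcard : d = m / g' := by
    rw [← hd, hH] at *
    rw [hHeq, Nat.card_zpowers, orderOf_pow, orderOf_rot, Nat.gcd_comm,
      Nat.gcd_eq_left hg'm]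
  have hd0 : 0 < d := by
    rw [hcard]
    exact Nat.div_pos (Nat.le_of_dvd hm0 hg'm) hg'0
  have hmd : m / d = g' := by
    rw [hcard, Nat.div_div_self hg'm (by omega)]
  have hdm : d ∣ m := by
    rw [hcard]
    exact Nat.div_dvd_of_dvd hg'm
  rw [hmd]
  refine ⟨hρH, ?_, hdm, hd0, ?_⟩
  · rw [orderOf_pow, orderOf_rot, Nat.gcd_comm, Nat.gcd_eq_left hg'm, ← hcard]
  · intro φ hφ
    have := hHeq ▸ hφ
    obtain ⟨n, hn⟩ := Subgroup.mem_zpowers_iff.mp this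
    exact ⟨n, hn.symm⟩

theorem rotation_stab_acts_freely (m d : ℕ) (hm : 3 ≤ m) (N : Set (Set (ZMod m)))
    (hN : IsNested m N) (hne : N.Nonempty)
    (hd : Nat.card (rotStab m N) = d) :
    (∀ I ∈ N, {J : Set (ZMod m) | ∃ φ ∈ rotStab m N, J = φ • I}.ncard = d) ∧
    d ∣ N.ncard ∧
    ∃ Ns : ℕ → Set (Set (ZMod m)),
      (∀ i < d, Ns i ⊆ N) ∧
      (∀ i < d, ∀ j < d, i ≠ j → Disjoint (Ns i) (Ns j)) ∧
      (⋃ i ∈ Finset.range d, Ns i) = N ∧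
      (∀ i < d, (Ns i).ncard = N.ncard / d) ∧
      (∀ i < d, ((rot m) ^ (m / d)) ^ i • Ns 0 = Ns i) := by
  haveI : NeZero m := ⟨by omega⟩
  have hm2 : 2 ≤ m := by omega
  have hfree : ∀ φ ∈ rotStab m N, ∀ I ∈ N, φ • I = I → φ = 1 :=
    fun φ hφ I hI hfix => rotStab_free hm2 hN hφ hI hfix
  obtain ⟨hρH, hρord, hdm, hd0, hgen⟩ := rotStab_gen hd
  -- Part 1
  have part1 : ∀ I ∈ N, {J : Set (ZMod m) | ∃ φ ∈ rotStab m N, J = φ • I}.ncard = d := by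
    intro I hI
    have heq : {J : Set (ZMod m) | ∃ φ ∈ rotStab m N, J = φ • I}
        = (fun φ : rotStab m N => (φ : Equiv.Perm (ZMod m)) • I) '' Set.univ := by
      ext J
      simp only [Set.image_univ, Set.mem_range, Set.mem_setOf_eq]
      constructor
      · rintro ⟨φ, hφ, rfl⟩; exact ⟨⟨φ, hφ⟩, rfl⟩
      · rintro ⟨⟨φ, hφ⟩, rfl⟩; exact ⟨φ, hφ, rfl⟩
    have hinj : Function.Injective (fun φ : rotStab m N => (φ : Equiv.Perm (ZMod m)) • I) := by
      intro φ ψ h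
      simp only at h
      have h2 : ((ψ : Equiv.Perm (ZMod m))⁻¹ * (φ : Equiv.Perm (ZMod m))) • I = I := by
        rw [mul_smul, h, inv_smul_smul]
      have h3 := hfree _ (mul_mem (inv_mem ψ.2) φ.2) I hI h2
      have h4 : (ψ : Equiv.Perm (ZMod m)) = (φ : Equiv.Perm (ZMod m)) := inv_mul_eq_one.mp h3
      exact Subtype.ext h4.symm
    rw [heq, Set.ncard_image_of_injective _ hinj, Set.ncard_univ, hd]
  refine ⟨part1, ?_⟩
  -- Setup for the partition
  set ρ := (rot m) ^ (m / d) with hρdef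
  have hρd : ρ ^ d = 1 := by rw [← hρord]; exact pow_orderOf_eq_one ρ
  have hρiH : ∀ i : ℕ, ρ ^ i ∈ rotStab m N := fun i => pow_mem hρH i
  have hstabN : ∀ ψ ∈ rotStab m N, ψ • N = N := by
    intro ψ hψ
    have hψ' : ψ ∈ Subgroup.zpowers (rot m) ⊓ nestedStab m N := hψ
    have h2 : ψ ∈ dihedral m ⊓ MulAction.stabilizer (Equiv.Perm (ZMod m)) N :=
      (Subgroup.mem_inf.mp hψ').2
    exact (Subgroup.mem_inf.mp h2).2
  have hsmemN : ∀ {I : Set (ZMod m)}, I ∈ N → ∀ i : ℕ, ρ ^ i • I ∈ N := by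
    intro I hI i
    have h1 : ρ ^ i • I ∈ ρ ^ i • N := Set.smul_mem_smul_set hI
    rwa [hstabN _ (hρiH i)] at h1
  set Orb : Set (ZMod m) → Set (Set (ZMod m)) := fun I => {J | ∃ i : ℕ, J = ρ ^ i • I}
    with hOrb
  have hOrbself : ∀ I, I ∈ Orb I := fun I => ⟨0, by rw [pow_zero, one_smul]⟩
  have hOrbshift : ∀ (I : Set (ZMod m)) (i : ℕ), Orb (ρ ^ i • I) = Orb I := by
    intro I i
    ext J
    constructor
    · rintro ⟨j, rfl⟩
      exact ⟨j + i, by rw [pow_add, mul_smul]⟩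
    · rintro ⟨j, rfl⟩
      refine ⟨j + i * (d - 1), ?_⟩
      rw [← mul_smul, ← pow_add]
      have h3 : (d - 1) + 1 = d := by omega
      have h1 : j + i * (d - 1) + i = j + d * i := by
        conv_rhs => rw [← h3]
        ring
      rw [h1, pow_add, pow_mul, hρd, one_pow, mul_one]
  obtain ⟨e, he⟩ := exists_injective_nat (Set (ZMod m))
  have hrepex : ∀ I : Set (ZMod m), ∃ J, J ∈ Orb I ∧ e J = sInf (e '' Orb I) := by
    intro I
    have hne' : (e '' Orb I).Nonempty := ⟨e I, I, hOrbself I, rfl⟩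
    obtain ⟨J, hJ, hJe⟩ := Nat.sInf_mem hne'
    exact ⟨J, hJ, hJe⟩
  set rep : Set (ZMod m) → Set (ZMod m) := fun I => (hrepex I).choose with hrep
  have hrepspec : ∀ I, rep I ∈ Orb I ∧ e (rep I) = sInf (e '' Orb I) :=
    fun I => (hrepex I).choose_spec
  have hrepeq : ∀ I J, Orb I = Orb J → rep I = rep J := by
    intro I J h
    apply he
    rw [(hrepspec I).2, (hrepspec J).2, h]
  have hreporb : ∀ (I : Set (ZMod m)) (i : ℕ), rep (ρ ^ i • I) = rep I :=
    fun I i => hrepeq _ _ (hOrbshift I i)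
  have hrepfix : ∀ I, rep (rep I) = rep I := by
    intro I
    obtain ⟨i, hi⟩ := (hrepspec I).1
    have h2 := hreporb I i
    rw [← hi] at h2
    exact h2
  set Ns0 : Set (Set (ZMod m)) := {J | J ∈ N ∧ rep J = J} with hNs0
  set Ns : ℕ → Set (Set (ZMod m)) := fun i => ρ ^ i • Ns0 with hNs
  -- basic facts
  have hNssub : ∀ i, Ns i ⊆ N := by
    intro i X hX
    obtain ⟨J, hJ, rfl⟩ := hX
    exact hsmemN hJ.1 i
  have hcancel : ∀ (i j : ℕ) (J1 J2 : Set (ZMod m)), i ≤ j → ρ ^ i • J1 = ρ ^ j • J2 →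
      J1 = ρ ^ (j - i) • J2 := by
    intro i j J1 J2 hij h
    have h2 : ρ ^ j = ρ ^ i * ρ ^ (j - i) := by rw [← pow_add]; congr 1; omega
    rw [h2, mul_smul] at h
    exact smul_left_cancel _ h
  have hdisj : ∀ i < d, ∀ j < d, i ≠ j → Disjoint (Ns i) (Ns j) := by
    have key : ∀ i j, i < j → j < d → Disjoint (Ns i) (Ns j) := by
      intro i j hij hjd
      rw [Set.disjoint_left]
      rintro X ⟨J1, hJ1, rfl⟩ ⟨J2, hJ2, hX2⟩
      have h1 : J1 = ρ ^ (j - i) • J2 := hcancel i j J1 J2 (by omega) hX2.symm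
      have h2 : rep J1 = rep J2 := by rw [h1, hreporb]
      have h3 : J1 = J2 := by rw [← hJ1.2, h2, hJ2.2]
      rw [← h3] at h1
      have h5 : ρ ^ (j - i) = 1 := hfree _ (hρiH (j - i)) J1 hJ1.1 h1.symm
      have h6 : d ∣ j - i := by
        rw [← hρord]
        exact orderOf_dvd_of_pow_eq_one h5
      have h7 : d ≤ j - i := Nat.le_of_dvd (by omega) h6
      omega
    intro i hi j hj hij
    rcases Nat.lt_or_ge i j with h | h
    · exact key i j h hj
    · exact (key j i (by omega) hi).symm
  have hunion : (⋃ i ∈ Finset.range d, Ns i) = N := by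
    apply Set.Subset.antisymm
    · intro X hX
      simp only [Set.mem_iUnion] at hX
      obtain ⟨i, _, hXi⟩ := hX
      exact hNssub i hXi
    · intro I hI
      obtain ⟨k, hk⟩ := (hrepspec I).1
      have hrepN : rep I ∈ N := by rw [hk]; exact hsmemN hI k
      have hrepNs0 : rep I ∈ Ns0 := ⟨hrepN, hrepfix I⟩
      have hIOrb : I ∈ Orb (rep I) := by
        rw [hk, hOrbshift]
        exact hOrbself I
      obtain ⟨k', hk'⟩ := hIOrb
      have hpow : ρ ^ (k' % d) = ρ ^ k' := by
        rw [← hρord]; exact pow_mod_orderOf ρ k'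
      have hk'' : I = ρ ^ (k' % d) • rep I := by rw [hpow]; exact hk'
      simp only [Set.mem_iUnion]
      refine ⟨k' % d, Finset.mem_range.mpr (Nat.mod_lt _ hd0), ?_⟩
      exact ⟨rep I, hrepNs0, hk''.symm⟩
  have hNfin : N.Finite := hN.1
  have hNscard : ∀ i, (Ns i).ncard = Ns0.ncard := fun i => Set.ncard_smul_set _ _
  have hcount : ∀ i, i ≤ d → (⋃ j ∈ Finset.range i, Ns j).ncard = i * Ns0.ncard := by
    intro i
    induction i with
    | zero => intro _; simp
    | succ n ih =>
      intro hn
      rw [Finset.range_add_one]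
      have hbu : (⋃ j ∈ insert n (Finset.range n), Ns j)
          = Ns n ∪ ⋃ j ∈ Finset.range n, Ns j := by
        simp [Set.biUnion_insert]
      rw [hbu]
      have hdisj2 : Disjoint (Ns n) (⋃ j ∈ Finset.range n, Ns j) := by
        rw [Set.disjoint_iUnion₂_right]
        intro j hj
        rw [Finset.mem_range] at hj
        exact hdisj n (by omega) j (by omega) (by omega)
      have hsubU : (⋃ j ∈ Finset.range n, Ns j) ⊆ N := by
        intro X hX
        simp only [Set.mem_iUnion] at hX
        obtain ⟨j, _, h⟩ := hX
        exact hNssub j h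
      rw [Set.ncard_union_eq hdisj2 (hNfin.subset (hNssub n)) (hNfin.subset hsubU)]
      rw [ih (by omega), hNscard n]
      ring
  have hNcard : N.ncard = d * Ns0.ncard := by
    rw [← hunion]
    exact hcount d le_rfl
  refine ⟨?_, Ns, fun i _ => hNssub i, hdisj, hunion, ?_, ?_⟩
  · rw [hNcard]; exact Dvd.intro _ rfl
  · intro i _
    rw [hNscard i, hNcard, Nat.mul_div_cancel_left _ hd0]
  · intro i _
    show ρ ^ i • Ns 0 = Ns i
    have : Ns 0 = Ns0 := by rw [hNs]; simp only [pow_zero, one_smul]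
    rw [this]
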